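/- (Segre type [(33)]) Let n = 3 with coordinates (u¹,u²,u³), and let U = {u ∈ ℝ³ : u² + u³ > 0}. Define the symmetric metric g by g₁₁ = 0, g₁₂ = 1, g₁₃ = 1, g₂₂ = −2u³, g₂₃ = u² + u³, g₃₃ = −2u²; then det g = 4(u² + u³) > 0 on U. Define c_{ijk} := (1/3)(∂_j g_{ik} − ∂_k g_{ij}) and the skew-symmetric field w by w₁₂ = w₃₁ = 0 and w₂₃ = 2/√(4u² + 4u³) (with w_{ji} = −w_{ij}, w_{ii} = 0). Then (g, c, w) satisfies conditions (cond1) on U. -/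

import Mathlib

open scoped BigOperators

/-- Partial derivative `∂_k f` in the `k`-th coordinate direction. -/
noncomputable def pd {n : ℕ} (k : Fin n) (f : (Fin n → ℝ) → ℝ) (u : Fin n → ℝ) : ℝ :=
  fderiv ℝ f u (Pi.single k 1)

/-- Conditions (cond1) for a triple `(g, c, w)` on a set `U ⊆ ℝⁿ`:
`g` is the (lower-index) metric `g_{ij}`, `c` are the lowered coefficients `c_{ijk}`,
`w` is the skew-symmetric 2-form `w_{ij}`, and `c^s_{jk} := g^{si} c_{ijk}` is computed
via the pointwise inverse matrix `(g u)⁻¹`. -/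
def Cond1 {n : ℕ} (U : Set (Fin n → ℝ))
    (g : (Fin n → ℝ) → Matrix (Fin n) (Fin n) ℝ)
    (c : (Fin n → ℝ) → Fin n → Fin n → Fin n → ℝ)
    (w : (Fin n → ℝ) → Matrix (Fin n) (Fin n) ℝ) : Prop :=
  ∀ u ∈ U,
    (∀ i j k, pd k (fun x => g x i j) u + c u i j k + c u j i k = 0) ∧
    (∀ i j k, c u i j k + c u i k j = 0) ∧
    (∀ i j k, pd k (fun x => g x i j) u + pd i (fun x => g x j k) u
        + pd j (fun x => g x k i) u = 0) ∧
    (∀ i j, w u i j + w u j i = 0) ∧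
    (∀ i j l, pd l (fun x => w x i j) u
        = ∑ s, (∑ a, (g u)⁻¹ s a * c u a i j) * w u s l) ∧
    (∀ m l p k, pd k (fun x => c x p m l) u
        + ∑ s, (∑ a, (g u)⁻¹ s a * c u a m l) * c u s p k + w u m l * w u p k = 0)

lemma pd_hasFDeriv {n : ℕ} (k : Fin n) {f : (Fin n → ℝ) → ℝ} {f' : (Fin n → ℝ) →L[ℝ] ℝ}
    {u : Fin n → ℝ} (h : HasFDerivAt f f' u) : pd k f u = f' (Pi.single k 1) := by
  unfold pd; rw [h.fderiv]

lemma pd_const {n : ℕ} (k : Fin n) (a : ℝ) (u : Fin n → ℝ) : pd k (fun _ => a) u = 0 := by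
  rw [pd_hasFDeriv k (hasFDerivAt_const a u)]; simp

lemma hproj {n : ℕ} (i : Fin n) (u : Fin n → ℝ) :
    HasFDerivAt (fun x : Fin n → ℝ => x i)
      (ContinuousLinearMap.proj (R := ℝ) (φ := fun _ : Fin n => ℝ) i) u :=
  (ContinuousLinearMap.proj (R := ℝ) (φ := fun _ : Fin n => ℝ) i).hasFDerivAt

lemma pdA (k : Fin 3) (u : Fin 3 → ℝ) :
    pd k (fun x => -(2 * x 2)) u = if k = 2 then -2 else 0 := by
  rw [pd_hasFDeriv k (by exact ((hproj 2 u).const_mul 2).neg :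
    HasFDerivAt (fun x : Fin 3 → ℝ => -(2 * x 2)) _ u)]
  fin_cases k <;> simp [Pi.single_apply]

lemma pdB (k : Fin 3) (u : Fin 3 → ℝ) :
    pd k (fun x => -(2 * x 1)) u = if k = 1 then -2 else 0 := by
  rw [pd_hasFDeriv k (by exact ((hproj 1 u).const_mul 2).neg :
    HasFDerivAt (fun x : Fin 3 → ℝ => -(2 * x 1)) _ u)]
  fin_cases k <;> simp [Pi.single_apply]

lemma pdC (k : Fin 3) (u : Fin 3 → ℝ) :
    pd k (fun x => x 1 + x 2) u = if k = 0 then 0 else 1 := by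
  rw [pd_hasFDeriv k (by exact (hproj 1 u).add (hproj 2 u) :
    HasFDerivAt (fun x : Fin 3 → ℝ => x 1 + x 2) _ u)]
  fin_cases k <;> simp [Pi.single_apply]

lemma pdW (l : Fin 3) (u : Fin 3 → ℝ) (h : 0 < u 1 + u 2) :
    pd l (fun x => 2 / Real.sqrt (4 * x 1 + 4 * x 2)) u =
      if l = 0 then 0 else -4 / ((4 * u 1 + 4 * u 2) * Real.sqrt (4 * u 1 + 4 * u 2)) := by
  have ha : (0:ℝ) < 4 * u 1 + 4 * u 2 := by linarith
  have hspos : 0 < Real.sqrt (4 * u 1 + 4 * u 2) := Real.sqrt_pos.2 ha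
  have hs2 : Real.sqrt (4 * u 1 + 4 * u 2) ^ 2 = 4 * u 1 + 4 * u 2 := Real.sq_sqrt ha.le
  have hh : HasFDerivAt (fun x : Fin 3 → ℝ => 4 * x 1 + 4 * x 2)
      ((4:ℝ) • ContinuousLinearMap.proj (R := ℝ) (φ := fun _ : Fin 3 => ℝ) 1
        + (4:ℝ) • ContinuousLinearMap.proj (R := ℝ) (φ := fun _ : Fin 3 => ℝ) 2) u :=
    ((hproj 1 u).const_mul 4).add ((hproj 2 u).const_mul 4)
  have hf := (((Real.hasDerivAt_sqrt ha.ne').inv hspos.ne').const_mul (2:ℝ)).comp_hasFDerivAt u hh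
  have hfun : (fun x : Fin 3 → ℝ => 2 / Real.sqrt (4 * x 1 + 4 * x 2))
      = fun x => 2 * (Real.sqrt (4 * x 1 + 4 * x 2))⁻¹ := by
    funext x; rw [div_eq_mul_inv]
  rw [hfun, pd_hasFDeriv l (by exact hf :
    HasFDerivAt (fun x : Fin 3 → ℝ => 2 * (Real.sqrt (4 * x 1 + 4 * x 2))⁻¹) _ u)]
  fin_cases l <;> simp [Pi.single_apply] <;> field_simp <;> nlinarith [hs2, hspos,
    Real.sq_sqrt (show (0:ℝ) ≤ 4 * (u 1 + u 2) by linarith)]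

lemma pdWneg (l : Fin 3) (u : Fin 3 → ℝ) (h : 0 < u 1 + u 2) :
    pd l (fun x => -(2 / Real.sqrt (4 * x 1 + 4 * x 2))) u =
      -(if l = 0 then 0 else -4 / ((4 * u 1 + 4 * u 2) * Real.sqrt (4 * u 1 + 4 * u 2))) := by
  have ha : (0:ℝ) < 4 * u 1 + 4 * u 2 := by linarith
  have hspos : 0 < Real.sqrt (4 * u 1 + 4 * u 2) := Real.sqrt_pos.2 ha
  have hs2 : Real.sqrt (4 * u 1 + 4 * u 2) ^ 2 = 4 * u 1 + 4 * u 2 := Real.sq_sqrt ha.le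
  have hh : HasFDerivAt (fun x : Fin 3 → ℝ => 4 * x 1 + 4 * x 2)
      ((4:ℝ) • ContinuousLinearMap.proj (R := ℝ) (φ := fun _ : Fin 3 => ℝ) 1
        + (4:ℝ) • ContinuousLinearMap.proj (R := ℝ) (φ := fun _ : Fin 3 => ℝ) 2) u :=
    ((hproj 1 u).const_mul 4).add ((hproj 2 u).const_mul 4)
  have hf := ((((Real.hasDerivAt_sqrt ha.ne').inv hspos.ne').const_mul
      (2:ℝ)).comp_hasFDerivAt u hh).neg
  have hfun : (fun x : Fin 3 → ℝ => -(2 / Real.sqrt (4 * x 1 + 4 * x 2)))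
      = fun x => -(2 * (Real.sqrt (4 * x 1 + 4 * x 2))⁻¹) := by
    funext x; rw [div_eq_mul_inv]
  rw [hfun, pd_hasFDeriv l (by exact hf :
    HasFDerivAt (fun x : Fin 3 → ℝ => -(2 * (Real.sqrt (4 * x 1 + 4 * x 2))⁻¹)) _ u)]
  fin_cases l <;> simp [Pi.single_apply] <;> field_simp <;> nlinarith [hs2, hspos,
    Real.sq_sqrt (show (0:ℝ) ≤ 4 * (u 1 + u 2) by linarith)]

/-- the constants `∂_k g_{ij}` -/
def DG : Fin 3 → Fin 3 → Fin 3 → ℝ :=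
  ![![![0,0,0],![0,0,0],![0,0,0]],
    ![![0,0,0],![0,0,1],![0,1,-2]],
    ![![0,0,0],![0,-2,1],![0,1,0]]]

/-- the constants `c_{ijk}` -/
def Cv : Fin 3 → Fin 3 → Fin 3 → ℝ :=
  ![![![0,0,0],![0,0,0],![0,0,0]],
    ![![0,0,0],![0,0,1],![0,-1,0]],
    ![![0,0,0],![0,0,-1],![0,1,0]]]

set_option maxHeartbeats 4000000 in
/-- Segre type [(33)]. With `(u¹,u²,u³) = (u 0, u 1, u 2)` and
`U = {u : u² + u³ > 0}`, the metric `g = !![0,1,1; 1,−2u³,u²+u³; 1,u²+u³,−2u²]`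
(with `det g = 4(u²+u³) > 0` on `U`), `c_{ijk} = (1/3)(∂_j g_{ik} − ∂_k g_{ij})` and the
skew form with `w₁₂ = w₃₁ = 0`, `w₂₃ = 2/√(4u² + 4u³)` satisfy (cond1) on `U`. -/
theorem segre_33_satisfies_cond1
    (U : Set (Fin 3 → ℝ)) (hU : U = {u | 0 < u 1 + u 2})
    (g : (Fin 3 → ℝ) → Matrix (Fin 3) (Fin 3) ℝ)
    (hg : g = fun u => !![0, 1, 1;
                          1, -(2 * u 2), u 1 + u 2;
                          1, u 1 + u 2, -(2 * u 1)])
    (c : (Fin 3 → ℝ) → Fin 3 → Fin 3 → Fin 3 → ℝ)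
    (hc : c = fun u i j k =>
      (1 / 3) * (pd j (fun x => g x i k) u - pd k (fun x => g x i j) u))
    (w : (Fin 3 → ℝ) → Matrix (Fin 3) (Fin 3) ℝ)
    (hw : w = fun u =>
      !![0, 0, 0;
         0, 0, 2 / Real.sqrt (4 * u 1 + 4 * u 2);
         0, -(2 / Real.sqrt (4 * u 1 + 4 * u 2)), 0]) :
    (∀ u ∈ U, (g u).det = 4 * (u 1 + u 2) ∧ 0 < (g u).det) ∧
    Cond1 U g c w := by
  have hpg : ∀ (v : Fin 3 → ℝ) (k i j : Fin 3),
      pd k (fun x => g x i j) v = DG k i j := by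
    intro v k i j
    rw [hg]
    fin_cases i <;> fin_cases j <;> fin_cases k <;>
      simp [DG, pd_const, pdA, pdB, pdC, Matrix.vecHead, Matrix.vecTail]
  have hcv : ∀ (v : Fin 3 → ℝ) (i j k : Fin 3), c v i j k = Cv i j k := by
    intro v i j k
    rw [hc]
    simp only [hpg]
    fin_cases i <;> fin_cases j <;> fin_cases k <;> norm_num [DG, Cv, Matrix.vecHead, Matrix.vecTail]
  constructor
  · intro u hu
    have hr : 0 < u 1 + u 2 := by rw [hU] at hu; exact hu
    have hdet : (g u).det = 4 * (u 1 + u 2) := by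
      rw [hg]; simp [Matrix.det_fin_three, Matrix.vecHead, Matrix.vecTail]; ring
    exact ⟨hdet, by rw [hdet]; linarith⟩
  · intro u hu
    have hr : 0 < u 1 + u 2 := by rw [hU] at hu; exact hu
    have ha : (0:ℝ) < 4 * u 1 + 4 * u 2 := by linarith
    have hspos : 0 < Real.sqrt (4 * u 1 + 4 * u 2) := Real.sqrt_pos.2 ha
    have hs2 : Real.sqrt (4 * u 1 + 4 * u 2) * Real.sqrt (4 * u 1 + 4 * u 2)
        = 4 * u 1 + 4 * u 2 := Real.mul_self_sqrt ha.le
    have hinv : (g u)⁻¹ = (4 * (u 1 + u 2))⁻¹ •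
        !![4 * u 1 * u 2 - (u 1 + u 2)^2, 2 * u 1 + (u 1 + u 2), (u 1 + u 2) + 2 * u 2;
           2 * u 1 + (u 1 + u 2), -1, 1;
           (u 1 + u 2) + 2 * u 2, 1, -1] := by
      apply Matrix.inv_eq_right_inv
      rw [hg]
      ext i j
      fin_cases i <;> fin_cases j <;>
        simp [Matrix.mul_apply, Fin.sum_univ_three, Matrix.smul_apply] <;>
        field_simp <;> ring
    refine ⟨?_, ?_, ?_, ?_, ?_, ?_⟩
    · intro i j k
      simp only [hpg, hcv]
      fin_cases i <;> fin_cases j <;> fin_cases k <;> norm_num [DG, Cv, Matrix.vecHead, Matrix.vecTail]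
    · intro i j k
      simp only [hcv]
      fin_cases i <;> fin_cases j <;> fin_cases k <;> norm_num [Cv, Matrix.vecHead, Matrix.vecTail]
    · intro i j k
      simp only [hpg]
      fin_cases i <;> fin_cases j <;> fin_cases k <;> norm_num [DG, Matrix.vecHead, Matrix.vecTail]
    · intro i j
      rw [hw]
      fin_cases i <;> fin_cases j <;> norm_num
    · intro i j l
      have hw1 : ∀ l : Fin 3, pd l (fun x => 2 / Real.sqrt (4 * x 1 + 4 * x 2)) u =
          if l = 0 then 0 else -4 / ((4 * u 1 + 4 * u 2) * Real.sqrt (4 * u 1 + 4 * u 2)) :=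
        fun l => pdW l u hr
      have hw2 : ∀ l : Fin 3, pd l (fun x => -(2 / Real.sqrt (4 * x 1 + 4 * x 2))) u =
          -(if l = 0 then 0 else
            -4 / ((4 * u 1 + 4 * u 2) * Real.sqrt (4 * u 1 + 4 * u 2))) :=
        fun l => pdWneg l u hr
      simp only [hcv, hinv, hw, Fin.sum_univ_three]
      fin_cases i <;> fin_cases j <;> fin_cases l <;>
        simp [Cv, pd_const, hw1, hw2, Matrix.smul_apply, Matrix.vecHead, Matrix.vecTail] <;>
        field_simp <;> nlinarith [hs2, hspos, hr]
    · intro m l p k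
      simp only [hcv, hinv, hw, Fin.sum_univ_three, pd_const]
      fin_cases m <;> fin_cases l <;> fin_cases p <;> fin_cases k <;>
        simp [Cv, pd_const, Matrix.smul_apply, Matrix.vecHead, Matrix.vecTail] <;>
        field_simp <;> nlinarith [hs2, hspos, hr,
          Real.sq_sqrt (show (0:ℝ) ≤ (u 1 + u 2) * 4 by linarith),
          Real.sq_sqrt (show (0:ℝ) ≤ 4 * (u 1 + u 2) by linarith)]
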